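/- Fix integers n ≥ 1 and 0 ≤ j ≤ n. In the complex vector space with basis e₁, …, e_n, the set of vectors {e_k : 1 ≤ k ≤ j} ∪ {e_{k-1} + e_{k+1} : j < k ≤ n} (with the convention e₀ = e_{n+1} = 0) spans the whole space if and only if n − j is even. -/

import Mathlib

def myf (n j : ℕ) : Fin n → (Fin n → ℂ) := fun i =>
  if (i : ℕ) < j then (Pi.single i 1 : Fin n → ℂ)
  else
    (if h0 : (i : ℕ) = 0 then (0 : Fin n → ℂ)
      else (Pi.single (⟨(i : ℕ) - 1, by have := i.isLt; omega⟩ : Fin n) 1 : Fin n → ℂ))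
    + (if hl : (i : ℕ) = n - 1 then (0 : Fin n → ℂ)
      else (Pi.single (⟨(i : ℕ) + 1, by have := i.isLt; omega⟩ : Fin n) 1 : Fin n → ℂ))

lemma myf_small (n j : ℕ) (i : Fin n) (h1 : (i : ℕ) < j) :
    myf n j i = Pi.single i 1 := by
  simp [myf, h1]

lemma myf_mid (n j : ℕ) (i : Fin n) (h1 : ¬ (i : ℕ) < j) (h2 : (i : ℕ) ≠ 0)
    (h3 : (i : ℕ) ≠ n - 1) :
    myf n j i = Pi.single (⟨(i : ℕ) - 1, by have := i.isLt; omega⟩ : Fin n) 1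
      + Pi.single (⟨(i : ℕ) + 1, by have := i.isLt; omega⟩ : Fin n) 1 := by
  simp [myf, h1, h2, h3]

lemma myf_left (n j : ℕ) (i : Fin n) (h1 : ¬ (i : ℕ) < j) (h2 : (i : ℕ) = 0)
    (h3 : (i : ℕ) ≠ n - 1) :
    myf n j i = Pi.single (⟨(i : ℕ) + 1, by have := i.isLt; omega⟩ : Fin n) 1 := by
  rw [myf, if_neg h1, dif_pos h2, dif_neg h3, zero_add]

lemma myf_right (n j : ℕ) (i : Fin n) (h1 : ¬ (i : ℕ) < j) (h2 : (i : ℕ) ≠ 0)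
    (h3 : (i : ℕ) = n - 1) :
    myf n j i = Pi.single (⟨(i : ℕ) - 1, by have := i.isLt; omega⟩ : Fin n) 1 := by
  rw [myf, if_neg h1, dif_neg h2, dif_pos h3, add_zero]

lemma span_of_singles {n : ℕ} (S : Submodule ℂ (Fin n → ℂ))
    (h : ∀ a : Fin n, (Pi.single a 1 : Fin n → ℂ) ∈ S) : S = ⊤ := by
  rw [eq_top_iff]
  rintro x -
  have hx : x = ∑ a : Fin n, x a • (Pi.single a 1 : Fin n → ℂ) := by
    ext b
    simp [Pi.single_apply, Finset.sum_ite_eq']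
  rw [hx]
  exact Submodule.sum_mem _ fun a _ => Submodule.smul_mem _ _ (h a)

def cf (n j : ℕ) : Fin n → ℂ := fun k =>
  if j ≤ (k : ℕ) ∧ ((k : ℕ) - j) % 2 = 0 then (-1 : ℂ) ^ (((k : ℕ) - j) / 2) else 0

lemma cf_mk (n j a : ℕ) (h : a < n) :
    cf n j ⟨a, h⟩ = if j ≤ a ∧ (a - j) % 2 = 0 then (-1 : ℂ) ^ ((a - j) / 2) else 0 := rfl

theorem myf_span (n j : ℕ) (hn : 1 ≤ n) (hj : j ≤ n) :
    Submodule.span ℂ (Set.range (myf n j)) = ⊤ ↔ Even (n - j) := by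
  set S := Submodule.span ℂ (Set.range (myf n j)) with hS
  have hmem : ∀ i : Fin n, myf n j i ∈ S :=
    fun i => Submodule.subset_span (Set.mem_range_self i)
  constructor
  · -- span = ⊤ → even
    intro hspan
    by_contra hodd
    have hjn : j < n := by
      rcases Nat.lt_or_ge j n with h | h
      · exact h
      · exact absurd (⟨0, by omega⟩ : Even (n - j)) hodd
    have hm : ¬ (n - j) % 2 = 0 := fun h => hodd (Nat.even_iff.mpr h)
    set φ : (Fin n → ℂ) →ₗ[ℂ] ℂ := ∑ k : Fin n, cf n j k • LinearMap.proj k with hφ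
    have hφx : ∀ x : Fin n → ℂ, φ x = ∑ k : Fin n, cf n j k * x k := by
      intro x; simp [hφ, LinearMap.sum_apply]
    have hφs : ∀ a : Fin n, φ (Pi.single a 1) = cf n j a := by
      intro a
      rw [hφx]
      have : ∀ k : Fin n, cf n j k * (Pi.single a 1 : Fin n → ℂ) k
          = if k = a then cf n j k else 0 := by
        intro k
        by_cases hk : k = a <;> simp [hk, Pi.single_apply]
      simp only [this, Finset.sum_ite_eq', Finset.mem_univ, if_pos]
    have hgen : ∀ i : Fin n, φ (myf n j i) = 0 := by
      intro i
      obtain ⟨iv, hiv⟩ := i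
      by_cases h1 : iv < j
      · rw [myf_small n j ⟨iv, hiv⟩ h1, hφs, cf_mk, if_neg (by omega)]
      · by_cases h2 : iv = 0
        · by_cases h3 : iv = n - 1
          · rw [myf, if_neg h1, dif_pos h2, dif_pos h3, add_zero, map_zero]
          · rw [myf_left n j ⟨iv, hiv⟩ h1 h2 h3, hφs, cf_mk]
            simp only [Fin.val_mk]
            rw [if_neg (by omega)]
        · by_cases h3 : iv = n - 1
          · rw [myf_right n j ⟨iv, hiv⟩ h1 h2 h3, hφs, cf_mk]
            simp only [Fin.val_mk]
            rw [if_neg (by omega)]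
          · by_cases h4 : (iv - j) % 2 = 0
            · rw [myf_mid n j ⟨iv, hiv⟩ h1 h2 h3, map_add, hφs, hφs, cf_mk, cf_mk]
              simp only [Fin.val_mk]
              rw [if_neg (by omega), if_neg (by omega), add_zero]
            · rw [myf_mid n j ⟨iv, hiv⟩ h1 h2 h3, map_add, hφs, hφs, cf_mk, cf_mk]
              simp only [Fin.val_mk]
              rw [if_pos (by omega), if_pos (by omega)]
              have he : (iv + 1 - j) / 2 = (iv - 1 - j) / 2 + 1 := by omega
              rw [he, pow_succ]
              ring
    have hle : S ≤ LinearMap.ker φ := by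
      rw [hS]
      refine Submodule.span_le.2 ?_
      rintro _ ⟨i, rfl⟩
      exact hgen i
    have hj' : (Pi.single (⟨j, hjn⟩ : Fin n) 1 : Fin n → ℂ) ∈ S := hspan ▸ Submodule.mem_top
    have hker := hle hj'
    rw [LinearMap.mem_ker, hφs, cf_mk, if_pos (by omega)] at hker
    simp at hker
  · -- even → span = ⊤
    intro heven
    apply span_of_singles
    -- claim 1 : small indices
    have c1 : ∀ a : Fin n, (a : ℕ) < j → (Pi.single a 1 : Fin n → ℂ) ∈ S := by
      intro a ha
      have := hmem a
      rwa [myf_small n j a ha] at this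
    rcases Nat.eq_or_lt_of_le hj with rfl | hjn
    · intro a; exact c1 a a.isLt
    -- now j < n and n - j even, so n - j ≥ 2, so j ≤ n - 2 and n ≥ 2
    have hn2 : 2 ≤ n - j := by
      rcases heven with ⟨k, hk⟩; omega
    -- claim 2: odd positions j+1+2m, going up
    have c2 : ∀ m : ℕ, ∀ h : j + 1 + 2 * m < n,
        (Pi.single (⟨j + 1 + 2 * m, h⟩ : Fin n) 1 : Fin n → ℂ) ∈ S := by
      intro m
      induction m with
      | zero =>
        intro h
        have hij : (((⟨j, hjn⟩ : Fin n) : ℕ)) = j := rfl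
        by_cases hj0 : j = 0
        · have := hmem ⟨j, hjn⟩
          rw [myf_left n j ⟨j, hjn⟩ (by omega) (by omega) (by simp [hij]; omega)] at this
          convert this using 3
          all_goals omega
        · have := hmem ⟨j, hjn⟩
          rw [myf_mid n j ⟨j, hjn⟩ (by omega) (by omega) (by simp [hij]; omega)] at this
          have h1 : (Pi.single (⟨j - 1, by omega⟩ : Fin n) 1 : Fin n → ℂ) ∈ S :=
            c1 _ (by simp; omega)
          have h2 := Submodule.sub_mem S this h1
          rw [add_sub_cancel_left] at h2
          convert h2 using 3
          all_goals omega
      | succ m ih =>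
        intro h
        have hlt : j + 2 * (m + 1) < n := by omega
        set i : Fin n := ⟨j + 2 * (m + 1), hlt⟩ with hi
        have hiv : (i : ℕ) = j + 2 * m + 2 := by simp [hi]; omega
        have hne : (i : ℕ) ≠ n - 1 := by
          rcases heven with ⟨k, hk⟩; omega
        have := hmem i
        rw [myf_mid n j i (by omega) (by omega) hne] at this
        have h1 : (Pi.single (⟨(i : ℕ) - 1, by omega⟩ : Fin n) 1 : Fin n → ℂ) ∈ S := by
          have := ih (by omega)
          convert this using 3
          all_goals omega
        have h2 := Submodule.sub_mem S this h1
        rw [add_sub_cancel_left] at h2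
        convert h2 using 3
        all_goals omega
    -- claim 3: even positions n-2-2m, going down
    have c3 : ∀ m : ℕ, ∀ h : 2 * m ≤ n - 2 - j,
        (Pi.single (⟨n - 2 - 2 * m, by omega⟩ : Fin n) 1 : Fin n → ℂ) ∈ S := by
      intro m
      induction m with
      | zero =>
        intro h
        have hlt : n - 1 < n := by omega
        have := hmem ⟨n - 1, hlt⟩
        rw [myf_right n j ⟨n - 1, hlt⟩ (by simp; omega) (by simp; omega) (by simp)] at this
        convert this using 3
        all_goals simp only [Fin.val_mk]; omega
      | succ m ih =>
        intro h
        have hlt : n - 2 - 2 * m - 1 < n := by omega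
        set i : Fin n := ⟨n - 2 - 2 * m - 1, hlt⟩ with hi
        have hiv : (i : ℕ) = n - 2 - 2 * m - 1 := rfl
        have := hmem i
        rw [myf_mid n j i (by simp [hiv]; omega) (by simp [hiv]; omega)
          (by simp [hiv]; omega)] at this
        have h1 : (Pi.single (⟨(i : ℕ) + 1, by omega⟩ : Fin n) 1 : Fin n → ℂ) ∈ S := by
          have := ih (by omega)
          convert this using 3
          all_goals omega
        have h2 := Submodule.sub_mem S this h1
        rw [add_sub_cancel_right] at h2
        have h3 : (Pi.single (⟨(i : ℕ) - 1, by omega⟩ : Fin n) 1 : Fin n → ℂ) ∈ S := h2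
        convert h3 using 3
        all_goals omega
    -- conclude
    intro a
    rcases Nat.lt_or_ge (a : ℕ) j with ha | ha
    · exact c1 a ha
    rcases Nat.even_or_odd ((a : ℕ) - j) with he | ho
    · -- a - j even: use c3 with m = (n - 2 - a)/2
      rcases he with ⟨k, hk⟩
      rcases heven with ⟨l, hl⟩
      have han : (a : ℕ) ≤ n - 2 := by have := a.isLt; omega
      have := c3 ((l - 1) - k) (by omega)
      convert this using 3
      all_goals omega
    · rcases ho with ⟨k, hk⟩
      have := c2 k (by have := a.isLt; omega)
      convert this using 3
      all_goals omega

/-- In `ℂⁿ` with standard basis `e₁,…,e_n`, the collection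
`{e_k : 1 ≤ k ≤ j} ∪ {e_{k-1} + e_{k+1} : j < k ≤ n}` (with `e₀ = e_{n+1} = 0`)
spans the whole space iff `n - j` is even.  (Indices here are 0-based: the
vector attached to `i : Fin n` is `e_i` for `i < j`, and `e_{i-1} + e_{i+1}`
otherwise.) -/
theorem stmt1 (n j : ℕ) (hn : 1 ≤ n) (hj : j ≤ n) :
    Submodule.span ℂ (Set.range (fun i : Fin n =>
      if (i : ℕ) < j then (Pi.single i 1 : Fin n → ℂ)
      else
        (if h0 : (i : ℕ) = 0 then (0 : Fin n → ℂ)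
          else (Pi.single (⟨(i : ℕ) - 1, by have := i.isLt; omega⟩ : Fin n) 1 : Fin n → ℂ))
        + (if hl : (i : ℕ) = n - 1 then (0 : Fin n → ℂ)
          else (Pi.single (⟨(i : ℕ) + 1, by have := i.isLt; omega⟩ : Fin n) 1 : Fin n → ℂ)))) = ⊤
    ↔ Even (n - j) := by
  show Submodule.span ℂ (Set.range (myf n j)) = ⊤ ↔ Even (n - j)
  exact myf_span n j hn hj
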